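/- Let P₁, P₂ be points of the Hermitian curve H(2,q²). Then a point X ⊗ Y of U_{2,2} (with X, Y ∈ H(2,q²)) is orthogonal to or equal to P₁ ⊗ P₂ with respect to β ⊗ β if and only if X = P₁ or Y = P₂. That is, the set of points of U_{2,2} orthogonal with or equal to P₁ ⊗ P₂ is {P₁ ⊗ X : X ∈ H(2,q²)} ∪ {X ⊗ P₂ : X ∈ H(2,q²)}. -/

import Mathlib

open scoped TensorProduct

namespace Stmt10

lemma tangent_aux
    (q : ℕ) (hq : IsPrimePow q)
    (K : Type*) [Field K] [Fintype K] (hK : Fintype.card K = q ^ 2)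
    (β : (Fin 3 → K) → (Fin 3 → K) → K)
    (βadd : ∀ x x' y, β (x + x') y = β x y + β x' y)
    (βsmul : ∀ (a : K) (x y), β (a • x) y = a * β x y)
    (βconj : ∀ x y, β y x = β x y ^ q)
    (βnondeg : ∀ x, (∀ y, β x y = 0) → x = 0)
    (p x : Fin 3 → K) (hp : p ≠ 0) (hx : x ≠ 0)
    (hpi : β p p = 0) (hxi : β x x = 0) (hxp : β x p = 0) :
    ∃ c : K, x = c • p := by
  have hq0 : q ≠ 0 := hq.pos.ne'
  have hpx : β p x = 0 := by rw [βconj, hxp, zero_pow hq0]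
  have βnondeg' : ∀ w : Fin 3 → K, (∀ v, β v w = 0) → w = 0 := by
    intro w h
    exact βnondeg w fun v => by rw [βconj, h v, zero_pow hq0]
  by_cases hli : LinearIndependent K ![x, p]
  · -- the hard case: two independent isotropic mutually-orthogonal vectors contradict
    -- nondegeneracy in dimension 3 (Witt index of a nondegenerate Hermitian form is 1)
    exfalso
    let f : (Fin 3 → K) →ₗ[K] K :=
      { toFun := fun v => β v x
        map_add' := fun a b => by exact βadd a b x
        map_smul' := fun a v => by exact βsmul a v x }
    let g : (Fin 3 → K) →ₗ[K] K :=
      { toFun := fun v => β v p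
        map_add' := fun a b => by exact βadd a b p
        map_smul' := fun a v => by exact βsmul a v p }
    have hf0 : f ≠ 0 := by
      intro h
      exact hx (βnondeg' x fun v => congrFun (congrArg DFunLike.coe h) v)
    have h3 : Module.finrank K (Fin 3 → K) = 3 := by simp [Module.finrank_fin_fun]
    -- W = span {x, p} has dim 2, so there is z outside of W
    set W : Submodule K (Fin 3 → K) := Submodule.span K (Set.range ![x, p]) with hWdef
    have hWrank : Module.finrank K W = 2 := by
      rw [hWdef, finrank_span_eq_card hli, Fintype.card_fin]
    have hWne : W ≠ ⊤ := by
      intro h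
      rw [h, finrank_top, h3] at hWrank
      omega
    obtain ⟨z, hz⟩ : ∃ z, z ∉ W := by
      by_contra h
      push_neg at h
      exact hWne (Submodule.eq_top_iff'.mpr h)
    have hxW : x ∈ W := Submodule.subset_span ⟨0, rfl⟩
    have hpW : p ∈ W := Submodule.subset_span ⟨1, rfl⟩
    -- W ⊔ span {z} is everything
    have hinf : W ⊓ Submodule.span K {z} = ⊥ := by
      rw [eq_bot_iff]
      rintro v ⟨hv1, hv2⟩
      obtain ⟨c, rfl⟩ := Submodule.mem_span_singleton.mp hv2
      rcases eq_or_ne c 0 with h | h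
      · simp [h]
      · exact absurd ((Submodule.smul_mem_iff W h).mp hv1) hz
    have hsup : W ⊔ Submodule.span K {z} = ⊤ := by
      apply Submodule.eq_top_of_finrank_eq
      have hz0 : z ≠ 0 := by
        intro h
        exact hz (h ▸ Submodule.zero_mem W)
      have := Submodule.finrank_sup_add_finrank_inf_eq W (Submodule.span K {z})
      rw [hinf, hWrank, finrank_span_singleton hz0, finrank_bot] at this
      rw [h3]
      omega
    -- if a functional kills x, p, z then it is zero
    have hkill : ∀ φ : (Fin 3 → K) →ₗ[K] K, φ x = 0 → φ p = 0 → φ z = 0 → φ = 0 := by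
      intro φ hφx hφp hφz
      rw [← LinearMap.ker_eq_top, ← top_le_iff, ← hsup, sup_le_iff]
      constructor
      · rw [hWdef, Submodule.span_le]
        rintro v ⟨i, rfl⟩
        fin_cases i <;> simpa
      · rw [Submodule.span_le, Set.singleton_subset_iff]
        simpa using hφz
    have hfz : f z ≠ 0 := by
      intro h
      exact hf0 (hkill f hxi hpx h)
    -- g is proportional to f
    set a : K := g z / f z with hadef
    have hfg : g = a • f := by
      have h0 : g - a • f = 0 := by
        apply hkill
        · show β x p - a * β x x = 0
          rw [hxp, hxi]; ring
        · show β p p - a * β p x = 0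
          rw [hpi, hpx]; ring
        · show β z p - a * β z x = 0
          have hfz' : f z = β z x := rfl
          have hgz' : g z = β z p := rfl
          rw [hadef]
          field_simp
          rw [hfz', hgz']
          ring
      rw [← sub_eq_zero]
      exact h0
    have hag : ∀ v, β v p = a * β v x := by
      intro v
      have h1 := congrArg (fun φ : (Fin 3 → K) →ₗ[K] K => φ v) hfg
      simp at h1
      exact h1
    -- hence p = a^q • x, contradicting linear independence
    have hpa : p + (-(a ^ q)) • x = 0 := by
      apply βnondeg
      intro v
      rw [βadd, βsmul]
      have h1 : β p v = a ^ q * β x v := by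
        rw [βconj v p, hag v, mul_pow, ← βconj v x]
      rw [h1]; ring
    have h2 := (LinearIndependent.pair_iff.mp hli (-(a ^ q)) 1
      (by rw [one_smul, add_comm]; exact hpa)).2
    exact one_ne_zero h2
  · rw [LinearIndependent.pair_iff] at hli
    push_neg at hli
    obtain ⟨s, t, hst, hne⟩ := hli
    by_cases hs : s = 0
    · subst hs
      simp only [zero_smul, zero_add] at hst
      have ht : t ≠ 0 := fun h => hne rfl h
      exact absurd (smul_eq_zero.mp hst) (by simp [ht, hp])
    · refine ⟨-(s⁻¹ * t), ?_⟩
      have h1 : s • x = -(t • p) := eq_neg_of_add_eq_zero_left hst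
      calc x = s⁻¹ • (s • x) := by rw [smul_smul, inv_mul_cancel₀ hs, one_smul]
        _ = -(s⁻¹ * t) • p := by rw [h1, smul_neg, smul_smul, neg_smul]

/-- Let `P₁ = ⟨p₁⟩`, `P₂ = ⟨p₂⟩` be points of the Hermitian curve `H(2,q²)`. A point
`X ⊗ Y = ⟨x ⊗ y⟩` of `U_{2,2}` is orthogonal to or equal to `P₁ ⊗ P₂` with respect to
`β ⊗ β` (orthogonality on simple tensors meaning `β(x,p₁)β(y,p₂) = 0`) if and only if
`X = P₁` or `Y = P₂`. -/
theorem orthogonal_or_equal_iff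
    (q : ℕ) (hq : IsPrimePow q)
    (K : Type*) [Field K] [Fintype K] (hK : Fintype.card K = q ^ 2)
    (β : (Fin 3 → K) → (Fin 3 → K) → K)
    (βadd : ∀ x x' y, β (x + x') y = β x y + β x' y)
    (βsmul : ∀ (a : K) (x y), β (a • x) y = a * β x y)
    (βconj : ∀ x y, β y x = β x y ^ q)
    (βnondeg : ∀ x, (∀ y, β x y = 0) → x = 0)
    (p₁ p₂ : Fin 3 → K) (hp₁ : p₁ ≠ 0) (hp₂ : p₂ ≠ 0)
    (hp₁i : β p₁ p₁ = 0) (hp₂i : β p₂ p₂ = 0)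
    (x y : Fin 3 → K) (hx : x ≠ 0) (hy : y ≠ 0)
    (hxi : β x x = 0) (hyi : β y y = 0) :
    (β x p₁ * β y p₂ = 0 ∨
        ∃ c : K, c ≠ 0 ∧ x ⊗ₜ[K] y = c • (p₁ ⊗ₜ[K] p₂)) ↔
      ((∃ c : K, x = c • p₁) ∨ (∃ c : K, y = c • p₂)) := by
  constructor
  · rintro (h | ⟨c, hc, hten⟩)
    · rcases mul_eq_zero.mp h with h1 | h2
      · exact Or.inl (tangent_aux q hq K hK β βadd βsmul βconj βnondeg p₁ x hp₁ hx hp₁i hxi h1)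
      · exact Or.inr (tangent_aux q hq K hK β βadd βsmul βconj βnondeg p₂ y hp₂ hy hp₂i hyi h2)
    · -- extract proportionality from the simple-tensor equality
      left
      obtain ⟨i, hi⟩ : ∃ i, y i ≠ 0 := by
        by_contra h
        push_neg at h
        exact hy (funext h)
      let L : ((Fin 3 → K) ⊗[K] (Fin 3 → K)) →ₗ[K] (Fin 3 → K) :=
        TensorProduct.lift
          (LinearMap.mk₂ K (fun v w => w i • v)
            (fun v v' w => smul_add _ _ _)
            (fun a v w => smul_comm _ _ _)
            (fun v w w' => by simp [add_smul])
            (fun a v w => by simp [smul_smul, mul_comm]))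
      have hL := congrArg L hten
      simp only [L, map_smul, TensorProduct.lift.tmul, LinearMap.mk₂_apply] at hL
      -- hL : y i • x = c • (p₂ i • p₁)
      refine ⟨(y i)⁻¹ * (c * p₂ i), ?_⟩
      have hxx : x = (y i)⁻¹ • (y i • x) := by
        rw [smul_smul, inv_mul_cancel₀ hi, one_smul]
      rw [hxx, hL, smul_smul, smul_smul, mul_assoc]
  · rintro (⟨c, rfl⟩ | ⟨c, rfl⟩)
    · left
      rw [βsmul, hp₁i]
      ring
    · left
      rw [βsmul, hp₂i]
      ring


end Stmt10
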